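/- Let G be a pure subgroup of P = ∏_{n∈ℕ} ℤ containing S = ⊕_{n∈ℕ} ℤ and closed under componentwise multiplication by the sequence d = (d_n), where d_n is divisible by p_k for all k ≤ n and d_n ≡ −1 mod q_k for all k ≤ n, with (p_n), (q_n) disjoint increasing sequences of primes. Then any homomorphism f : G → ℤ with f(e_n) = 0 for all n is identically zero. -/

import Mathlib

theorem stmt_15 (G : AddSubgroup (ℕ → ℤ))
    (p q : ℕ → ℕ) (hp : ∀ n, (p n).Prime) (hq : ∀ n, (q n).Prime)
    (hpm : StrictMono p) (hqm : StrictMono q)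
    (hdisj : Disjoint (Set.range p) (Set.range q))
    (d : ℕ → ℤ) (hd1 : ∀ n, ∀ k ≤ n, (p k : ℤ) ∣ d n)
    (hd2 : ∀ n, ∀ k ≤ n, d n ≡ -1 [ZMOD (q k)])
    -- `G` contains `S`, the finitely supported sequences :
    (hS : ∀ x : ℕ → ℤ, (Function.support x).Finite → x ∈ G)
    -- `G` is pure in `P` :
    (hpure : ∀ x ∈ G, ∀ m : ℤ, (∃ y : ℕ → ℤ, x = m • y) → ∃ y ∈ G, x = m • y)
    -- `G` is closed under componentwise multiplication by `d` :
    (hclosed : ∀ x ∈ G, (fun n => d n * x n) ∈ G)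
    (e : ℕ → G) (he : ∀ n, (e n : ℕ → ℤ) = Pi.single n 1)
    (f : G →+ ℤ) (hf : ∀ n, f (e n) = 0) :
    f = 0 := by
  -- an integer divisible by infinitely many primes is zero
  have key : ∀ (r : ℕ → ℕ), (∀ n, (r n).Prime) → StrictMono r →
      ∀ N : ℤ, (∀ k, (r k : ℤ) ∣ N) → N = 0 := by
    intro r hr hrm N hN
    by_contra h0
    have hk := hN (N.natAbs + 1)
    have h1 : r (N.natAbs + 1) ∣ N.natAbs := by
      rwa [Int.natCast_dvd] at hk
    have h2 : r (N.natAbs + 1) ≤ N.natAbs :=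
      Nat.le_of_dvd (Int.natAbs_pos.mpr h0) h1
    have h3 : N.natAbs + 1 ≤ r (N.natAbs + 1) := hrm.le_apply
    omega
  -- f vanishes on eventually-zero elements of G
  have fzero : ∀ (g : G) (k : ℕ), (∀ n, k ≤ n → (g : ℕ → ℤ) n = 0) → f g = 0 := by
    intro g k hg
    have hg' : g = ∑ n ∈ Finset.range k, ((g : ℕ → ℤ) n) • e n := by
      apply Subtype.ext
      have : ((∑ n ∈ Finset.range k, ((g : ℕ → ℤ) n) • e n : G) : ℕ → ℤ)
          = ∑ n ∈ Finset.range k, ((g : ℕ → ℤ) n) • ((e n : ℕ → ℤ)) := by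
        push_cast
        rfl
      rw [this]
      funext m
      rw [Finset.sum_apply]
      by_cases hm : m < k
      · rw [Finset.sum_eq_single m]
        · simp [he, Pi.single_apply]
        · intro n hn hnm
          simp [he, Pi.single_apply, Ne.symm hnm]
        · intro h
          exact absurd (Finset.mem_range.mpr hm) h
      · rw [hg m (not_lt.mp hm)]
        symm
        apply Finset.sum_eq_zero
        intro n hn
        have : n ≠ m := by
          intro h; subst h; exact hm (Finset.mem_range.mp hn)
        simp [he, Pi.single_apply, this]
    rw [hg', map_sum]
    simp [hf]
  -- main argument
  ext x
  simp only [AddMonoidHom.zero_apply]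
  set xv : ℕ → ℤ := (x : ℕ → ℤ) with hxv
  have hyG : (fun n => d n * xv n) ∈ G := hclosed xv x.2
  set Y : G := ⟨fun n => d n * xv n, hyG⟩ with hY
  -- Step B : p k ∣ f Y for all k
  have hB : ∀ k, (p k : ℤ) ∣ f Y := by
    intro k
    set s : ℕ → ℤ := fun n => if n < k then d n * xv n else 0 with hs
    have hsG : s ∈ G := by
      apply hS
      apply Set.Finite.subset (Set.finite_Iio k)
      intro n hn
      simp only [Function.mem_support, hs] at hn
      by_contra hnk
      simp only [Set.mem_Iio, not_lt] at hnk
      exact hn (if_neg (not_lt.mpr hnk))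
    set S' : G := ⟨s, hsG⟩ with hS'
    have hfS : f S' = 0 := by
      apply fzero S' k
      intro n hn
      exact if_neg (not_lt.mpr hn)
    set gv : ℕ → ℤ := fun n => d n * xv n - s n with hgv
    have hgG : gv ∈ G := by
      have := sub_mem hyG hsG
      convert this using 1
      rfl
    have hdvd : ∀ n, (p k : ℤ) ∣ gv n := by
      intro n
      by_cases hn : n < k
      · simp [hgv, hs, if_pos hn]
      · have : s n = 0 := if_neg hn
        simp only [hgv, this, sub_zero]
        exact Dvd.dvd.mul_right (hd1 n k (not_lt.mp hn)) _
    obtain ⟨z, hzG, hz⟩ := hpure gv hgG (p k)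
      ⟨fun n => gv n / (p k : ℤ), funext fun n => by
        simp only [Pi.smul_apply, smul_eq_mul]
        exact (Int.mul_ediv_cancel' (hdvd n)).symm⟩
    have hEq : (⟨gv, hgG⟩ : G) = Y - S' := by
      apply Subtype.ext
      rfl
    have hEq2 : (⟨gv, hgG⟩ : G) = (p k : ℤ) • (⟨z, hzG⟩ : G) := by
      apply Subtype.ext
      exact hz
    have := congrArg f (hEq.symm.trans hEq2)
    rw [map_sub, hfS, sub_zero, map_zsmul] at this
    exact ⟨f ⟨z, hzG⟩, by rw [this, smul_eq_mul]⟩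
  -- Step A : q k ∣ f x + f Y for all k
  have hA : ∀ k, (q k : ℤ) ∣ f x + f Y := by
    intro k
    set s : ℕ → ℤ := fun n => if n < k then xv n + d n * xv n else 0 with hs
    have hsG : s ∈ G := by
      apply hS
      apply Set.Finite.subset (Set.finite_Iio k)
      intro n hn
      simp only [Function.mem_support, hs] at hn
      by_contra hnk
      simp only [Set.mem_Iio, not_lt] at hnk
      exact hn (if_neg (not_lt.mpr hnk))
    set S' : G := ⟨s, hsG⟩ with hS'
    have hfS : f S' = 0 := by
      apply fzero S' k
      intro n hn
      exact if_neg (not_lt.mpr hn)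
    set gv : ℕ → ℤ := fun n => xv n + d n * xv n - s n with hgv
    have hgG : gv ∈ G := by
      have := sub_mem (add_mem x.2 hyG) hsG
      convert this using 1
      rfl
    have hdvd : ∀ n, (q k : ℤ) ∣ gv n := by
      intro n
      by_cases hn : n < k
      · simp [hgv, hs, if_pos hn]
      · have hsn : s n = 0 := if_neg hn
        have hmod := hd2 n k (not_lt.mp hn)
        have h1 : (q k : ℤ) ∣ d n + 1 := by
          have := Int.ModEq.dvd hmod
          have h2 : -1 - d n = -(d n + 1) := by ring
          rw [h2, dvd_neg] at this
          exact this
        have : gv n = (d n + 1) * xv n := by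
          simp only [hgv, hsn, sub_zero]; ring
        rw [this]
        exact Dvd.dvd.mul_right h1 _
    obtain ⟨z, hzG, hz⟩ := hpure gv hgG (q k)
      ⟨fun n => gv n / (q k : ℤ), funext fun n => by
        simp only [Pi.smul_apply, smul_eq_mul]
        exact (Int.mul_ediv_cancel' (hdvd n)).symm⟩
    have hEq : (⟨gv, hgG⟩ : G) = x + Y - S' := by
      apply Subtype.ext
      rfl
    have hEq2 : (⟨gv, hgG⟩ : G) = (q k : ℤ) • (⟨z, hzG⟩ : G) := by
      apply Subtype.ext
      exact hz
    have := congrArg f (hEq.symm.trans hEq2)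
    rw [map_sub, map_add, hfS, sub_zero, map_zsmul] at this
    exact ⟨f ⟨z, hzG⟩, by rw [this, smul_eq_mul]⟩
  have hfY : f Y = 0 := key p hp hpm _ hB
  have hfxY : f x + f Y = 0 := key q hq hqm _ hA
  rw [hfY, add_zero] at hfxY
  exact hfxY
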